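/- Let T > 0, C > 0, U > 0 with C T ≤ e^{−3/2}. Let (a_k)_{k ≥ 1} be a sequence of nonnegative continuous functions on [0,T] such that a₁(t) ≤ U T for all t ∈ [0,T], and a_{k+1}(t) ≤ C ∫₀ᵗ λ(a_k(τ)) dτ for all k ≥ 1 and t ∈ [0,T]. Then a_{k+1}(t) ≤ (C + U) T e^{−k/2} for all k ≥ 1 and t ∈ [0,T]. -/

import Mathlib

/-- The quasi-Lipschitz modulus: `λ(d) = d (1 - log d)` for `0 ≤ d < 1`
and `λ(d) = 1` for `d ≥ 1`. -/
noncomputable def qlLambda (d : ℝ) : ℝ := if 1 ≤ d then 1 else d * (1 - Real.log d)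

lemma continuous_qlLambda : Continuous qlLambda := by
  have h : Continuous fun d : ℝ => d * (1 - Real.log d) := by
    have h2 : Continuous fun d : ℝ => d - d * Real.log d :=
      continuous_id.sub Real.continuous_mul_log
    convert h2 using 2 with d
    ring
  have h3 : Continuous fun x : ℝ => if (1:ℝ) ≤ x then (1:ℝ) else x * (1 - Real.log x) :=
    Continuous.if_le continuous_const h continuous_const continuous_id
      (fun x hx => by rw [← hx]; norm_num)
  exact h3

lemma qlLambda_le {d m : ℝ} (hd : 0 ≤ d) (hm : 1 ≤ m) :
    qlLambda d ≤ m * d + Real.exp (-m) := by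
  unfold qlLambda
  split_ifs with h
  · have : 1 ≤ m * d := one_le_mul_of_one_le_of_one_le hm h
    nlinarith [Real.exp_pos (-m)]
  · push_neg at h
    rcases eq_or_lt_of_le hd with rfl | hd0
    · simpa using (Real.exp_pos (-m)).le
    · have hlog : Real.log (Real.exp (-m) / d) ≤ Real.exp (-m) / d - 1 :=
        Real.log_le_sub_one_of_pos (by positivity)
      have hld : Real.log (Real.exp (-m) / d) = -m - Real.log d := by
        rw [Real.log_div (Real.exp_ne_zero _) (ne_of_gt hd0), Real.log_exp]
      rw [hld] at hlog
      have this2 := mul_le_mul_of_nonneg_left hlog hd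
      have hne : d ≠ 0 := ne_of_gt hd0
      have h2 : d * (Real.exp (-m)/d - 1) = Real.exp (-m) - d := by field_simp
      nlinarith [this2]

lemma pow_self_div_factorial_le_exp (k : ℕ) :
    (k:ℝ)^k / k.factorial ≤ Real.exp k := by
  have h := Real.sum_le_exp_of_nonneg (x := (k:ℝ)) (by positivity) (k+1)
  refine le_trans ?_ h
  exact Finset.single_le_sum (f := fun i => (k:ℝ)^i / i.factorial)
    (fun i _ => by positivity) (Finset.self_mem_range_succ k)

lemma exp_sub_one_le_mul (x : ℝ) : Real.exp x - 1 ≤ x * Real.exp x := by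
  have h1 : (1 - x) * Real.exp x ≤ 1 := by
    calc (1 - x) * Real.exp x ≤ Real.exp (-x) * Real.exp x :=
          mul_le_mul_of_nonneg_right (by linarith [Real.add_one_le_exp (-x)])
            (Real.exp_pos x).le
      _ = 1 := by rw [← Real.exp_add]; simp
  nlinarith

lemma exp_neg_three_halves_le : Real.exp (-(3/2 : ℝ)) ≤ 1/2 := by
  have h := Real.add_one_le_exp (3/2 : ℝ)
  rw [Real.exp_neg, inv_le_comm₀ (Real.exp_pos _) (by norm_num)]
  linarith

/-- The comparison function for the iteration. -/
noncomputable def qlPhi (C U T m : ℝ) (j : ℕ) (t : ℝ) : ℝ :=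
  U * T * (C * m * t) ^ j / j.factorial + Real.exp (-m) / m * (Real.exp (C * m * t) - 1)

lemma continuous_qlPhi (C U T m : ℝ) (j : ℕ) : Continuous (qlPhi C U T m j) := by
  unfold qlPhi
  fun_prop

lemma qlPhi_hasDerivAt (C U T m : ℝ) (hm : m ≠ 0) (j : ℕ) (t : ℝ) :
    HasDerivAt (qlPhi C U T m (j+1)) (C * (m * qlPhi C U T m j t + Real.exp (-m))) t := by
  have h1 : HasDerivAt (fun t : ℝ => C * m * t) (C * m) t := by
    simpa using (hasDerivAt_id t).const_mul (C * m)
  have hp := h1.pow (j+1)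
  have hexp := h1.exp
  have hsum := ((hp.const_mul (U*T)).div_const ((j+1).factorial : ℝ)).add
    ((hexp.sub_const 1).const_mul (Real.exp (-m) / m))
  have hfun : qlPhi C U T m (j+1) = fun t => U * T * (C * m * t) ^ (j+1) / ((j+1).factorial : ℝ)
      + Real.exp (-m) / m * (Real.exp (C * m * t) - 1) := rfl
  rw [hfun]
  refine hsum.congr_deriv ?_
  have hfa : ((j+1).factorial : ℝ) = ((j:ℝ)+1) * (j.factorial : ℝ) := by
    rw [Nat.factorial_succ]; push_cast; ring
  unfold qlPhi
  rw [hfa]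
  simp only [Nat.add_sub_cancel, Nat.cast_add, Nat.cast_one]
  have hfj : (j.factorial : ℝ) ≠ 0 := Nat.cast_ne_zero.mpr (Nat.factorial_ne_zero j)
  have hj1 : ((j:ℝ) + 1) ≠ 0 := by positivity
  field_simp
  ring

/-- Geometric decay of the iterates of the Osgood-type integral recursion: if `C T ≤ e^{-3/2}`,
`a₁ ≤ U T` on `[0,T]`, and `a_{k+1}(t) ≤ C ∫₀ᵗ λ(a_k(τ))` dτ`, then
`a_{k+1}(t) ≤ (C + U) T e^{-k/2}` for all `k ≥ 1` and `t ∈ [0,T]`. -/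
theorem picard_geometric_decay (T C U : ℝ) (hT : 0 < T) (hC : 0 < C) (hU : 0 < U)
    (hCT : C * T ≤ Real.exp (-(3 / 2 : ℝ)))
    (a : ℕ → ℝ → ℝ)
    (hnonneg : ∀ k, 1 ≤ k → ∀ t ∈ Set.Icc (0 : ℝ) T, 0 ≤ a k t)
    (hcont : ∀ k, 1 ≤ k → ContinuousOn (a k) (Set.Icc 0 T))
    (h1 : ∀ t ∈ Set.Icc (0 : ℝ) T, a 1 t ≤ U * T)
    (hrec : ∀ k, 1 ≤ k → ∀ t ∈ Set.Icc (0 : ℝ) T,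
      a (k + 1) t ≤ C * ∫ τ in (0 : ℝ)..t, qlLambda (a k τ)) :
    ∀ k, 1 ≤ k → ∀ t ∈ Set.Icc (0 : ℝ) T,
      a (k + 1) t ≤ (C + U) * T * Real.exp (-(k : ℝ) / 2) := by
  intro k hk t ht
  set m : ℝ := (k : ℝ) with hmdef
  have hm1 : (1:ℝ) ≤ m := by rw [hmdef]; exact_mod_cast hk
  have hm0 : (0:ℝ) < m := lt_of_lt_of_le one_pos hm1
  have key : ∀ j : ℕ, ∀ s ∈ Set.Icc (0:ℝ) T, a (j+1) s ≤ qlPhi C U T m j s := by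
    intro j
    induction j with
    | zero =>
      intro s hs
      obtain ⟨hs0, _⟩ := hs
      have hUT := h1 s ⟨hs0, by assumption⟩
      have hx : (0:ℝ) ≤ C * m * s := by positivity
      have he : (1:ℝ) ≤ Real.exp (C * m * s) := Real.one_le_exp hx
      have hnn : 0 ≤ Real.exp (-m) / m * (Real.exp (C*m*s) - 1) :=
        mul_nonneg (by positivity) (by linarith)
      have hval : qlPhi C U T m 0 s
          = U * T + Real.exp (-m) / m * (Real.exp (C*m*s) - 1) := by
        simp [qlPhi]
      rw [hval]
      linarith
    | succ j ih =>
      intro s hs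
      obtain ⟨hs0, hsT⟩ := hs
      have hsub : Set.uIcc (0:ℝ) s ⊆ Set.Icc 0 T := by
        rw [Set.uIcc_of_le hs0]; exact Set.Icc_subset_Icc le_rfl hsT
      have hsubI : Set.Icc (0:ℝ) s ⊆ Set.Icc 0 T := Set.Icc_subset_Icc le_rfl hsT
      have hcont1 : ContinuousOn (a (j+1)) (Set.Icc 0 T) := hcont (j+1) (by omega)
      have hInt1 : IntervalIntegrable (fun τ => qlLambda (a (j+1) τ)) MeasureTheory.volume 0 s :=
        ((continuous_qlLambda.comp_continuousOn hcont1).mono hsub).intervalIntegrable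
      have hInt2 : IntervalIntegrable (fun τ => m * a (j+1) τ + Real.exp (-m))
          MeasureTheory.volume 0 s := by
        apply ContinuousOn.intervalIntegrable
        exact (((hcont1.const_smul m).mono hsub).add continuousOn_const)
      have hInt3 : IntervalIntegrable (fun τ => m * qlPhi C U T m j τ + Real.exp (-m))
          MeasureTheory.volume 0 s :=
        ((continuous_const.mul (continuous_qlPhi C U T m j)).add continuous_const).intervalIntegrable 0 s
      have mono1 : (∫ τ in (0:ℝ)..s, qlLambda (a (j+1) τ))
          ≤ ∫ τ in (0:ℝ)..s, (m * a (j+1) τ + Real.exp (-m)) :=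
        intervalIntegral.integral_mono_on hs0 hInt1 hInt2
          (fun τ hτ => qlLambda_le (hnonneg (j+1) (by omega) τ (hsubI hτ)) hm1)
      have mono2 : (∫ τ in (0:ℝ)..s, (m * a (j+1) τ + Real.exp (-m)))
          ≤ ∫ τ in (0:ℝ)..s, (m * qlPhi C U T m j τ + Real.exp (-m)) :=
        intervalIntegral.integral_mono_on hs0 hInt2 hInt3
          (fun τ hτ => add_le_add_left
            (mul_le_mul_of_nonneg_left (ih τ (hsubI hτ)) hm0.le) _)
      have heq : (∫ τ in (0:ℝ)..s, C * (m * qlPhi C U T m j τ + Real.exp (-m)))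
          = qlPhi C U T m (j+1) s := by
        rw [intervalIntegral.integral_eq_sub_of_hasDerivAt
          (fun τ _ => qlPhi_hasDerivAt C U T m (ne_of_gt hm0) j τ)
          ((continuous_const.mul ((continuous_const.mul
            (continuous_qlPhi C U T m j)).add continuous_const)).intervalIntegrable 0 s)]
        have h0 : qlPhi C U T m (j+1) 0 = 0 := by
          simp [qlPhi]
        rw [h0, sub_zero]
      calc a (j+1+1) s ≤ C * ∫ τ in (0:ℝ)..s, qlLambda (a (j+1) τ) :=
            hrec (j+1) (by omega) s ⟨hs0, hsT⟩
        _ ≤ C * ∫ τ in (0:ℝ)..s, (m * qlPhi C U T m j τ + Real.exp (-m)) :=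
            mul_le_mul_of_nonneg_left (le_trans mono1 mono2) hC.le
        _ = ∫ τ in (0:ℝ)..s, C * (m * qlPhi C U T m j τ + Real.exp (-m)) :=
            (intervalIntegral.integral_const_mul _ _).symm
        _ = qlPhi C U T m (j+1) s := heq
  have hb := key k t ht
  obtain ⟨ht0, htT⟩ := ht
  have hfk : (0:ℝ) < (k.factorial : ℝ) := by
    exact_mod_cast k.factorial_pos
  -- term 1 bound
  have h1a : (C*m*t)^k ≤ (C*T)^k * m^k := by
    calc (C*m*t)^k ≤ (C*m*T)^k := pow_le_pow_left₀ (by positivity)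
          (mul_le_mul_of_nonneg_left htT (by positivity)) k
      _ = (C*T)^k * m^k := by ring
  have h1b : (C*T)^k ≤ Real.exp (-(3/2:ℝ)) ^ k := pow_le_pow_left₀ (by positivity) hCT k
  have h1c : m^k / (k.factorial:ℝ) ≤ Real.exp m := pow_self_div_factorial_le_exp k
  have h1d : Real.exp (-(3/2:ℝ)) ^ k * Real.exp m = Real.exp (-m/2) := by
    rw [← Real.exp_nat_mul, ← Real.exp_add]
    congr 1
    rw [hmdef]
    ring
  have hterm1 : U*T*(C*m*t)^k/(k.factorial:ℝ) ≤ U*T*Real.exp (-m/2) := by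
    have e1 : U*T*(C*m*t)^k/(k.factorial:ℝ) ≤ U*T*((C*T)^k * m^k)/(k.factorial:ℝ) := by
      gcongr
    have e2 : U*T*((C*T)^k * m^k)/(k.factorial:ℝ)
        = U*T*((C*T)^k * (m^k/(k.factorial:ℝ))) := by ring
    have e3 : (C*T)^k * (m^k/(k.factorial:ℝ)) ≤ Real.exp (-(3/2:ℝ)) ^ k * Real.exp m :=
      mul_le_mul h1b h1c (by positivity) (by positivity)
    calc U*T*(C*m*t)^k/(k.factorial:ℝ)
        ≤ U*T*((C*T)^k * (m^k/(k.factorial:ℝ))) := by rw [← e2]; exact e1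
      _ ≤ U*T*(Real.exp (-(3/2:ℝ)) ^ k * Real.exp m) :=
          mul_le_mul_of_nonneg_left e3 (by positivity)
      _ = U*T*Real.exp (-m/2) := by rw [h1d]
  -- term 2 bound
  have hhalf : C*T ≤ 1/2 := le_trans hCT exp_neg_three_halves_le
  have h2a : Real.exp (C*m*t) - 1 ≤ (C*m*T) * Real.exp (m/2) := by
    have e1 : Real.exp (C*m*t) ≤ Real.exp (C*m*T) :=
      Real.exp_le_exp.mpr (mul_le_mul_of_nonneg_left htT (by positivity))
    have e2 := exp_sub_one_le_mul (C*m*T)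
    have e3 : Real.exp (C*m*T) ≤ Real.exp (m/2) := Real.exp_le_exp.mpr
      (by nlinarith [mul_le_mul_of_nonneg_left hhalf hm0.le])
    have hpos : (0:ℝ) ≤ C*m*T := by positivity
    nlinarith [Real.exp_pos (C*m*T)]
  have hterm2 : Real.exp (-m)/m * (Real.exp (C*m*t) - 1) ≤ C*T*Real.exp (-m/2) := by
    have e4 : Real.exp (-m)/m * (Real.exp (C*m*t) - 1)
        ≤ Real.exp (-m)/m * ((C*m*T) * Real.exp (m/2)) :=
      mul_le_mul_of_nonneg_left h2a (by positivity)
    have e5 : Real.exp (-m)/m * ((C*m*T) * Real.exp (m/2))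
        = C*T*(Real.exp (-m) * Real.exp (m/2)) := by
      field_simp
    have e6 : Real.exp (-m) * Real.exp (m/2) = Real.exp (-m/2) := by
      rw [← Real.exp_add]; congr 1; ring
    rw [e5, e6] at e4
    exact e4
  have hsplit : (C+U)*T*Real.exp (-m/2)
      = C*T*Real.exp (-m/2) + U*T*Real.exp (-m/2) := by ring
  have hphi : qlPhi C U T m k t
      = U*T*(C*m*t)^k/(k.factorial:ℝ) + Real.exp (-m)/m * (Real.exp (C*m*t) - 1) := rfl
  rw [hphi] at hb
  linarith
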